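/- arXiv:1508.00125 — 2 statements merged into one kernel-verified Lean document; each statement's English description precedes it below -/
import Mathlib

section
/- Let x ∈ B^n with x ≠ 0 and set n_x := x/|x|. If ℓ, ℓ' ∈ ∂B^n are unit vectors with |⟨n_x, ℓ⟩| = |⟨n_x, ℓ'⟩| (i.e. the angle between the straight line spanned by n_x and the line spanned by ℓ equals the angle between the line spanned by n_x and the line spanned by ℓ'), then 𝒞(x;ℓ) = 𝒞(x;ℓ'). -/
open Metric Real
open scoped RealInnerProductSpace

noncomputable section

/-- A real-valued function on `ℝⁿ` is harmonic on the open unit ball: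
it is `C²` there and its Laplacian vanishes at every point of the ball. -/
def HarmonicOnBall (n : ℕ) (U : EuclideanSpace ℝ (Fin n) → ℝ) : Prop :=
  ContDiffOn ℝ 2 U (ball 0 1) ∧
    ∀ x ∈ ball (0 : EuclideanSpace ℝ (Fin n)) 1,
      ∑ i : Fin n,
        fderiv ℝ (fun y => fderiv ℝ U y (EuclideanSpace.single i 1)) x
          (EuclideanSpace.single i 1) = 0

/-- `𝒞(x;ℓ)`: the optimal constant in the estimate for the derivative in
direction `ℓ` at `x` of harmonic functions bounded by `1` on the unit ball. -/
def dirConst (n : ℕ) (x ℓ : EuclideanSpace ℝ (Fin n)) : ℝ :=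
  sSup { c : ℝ | ∃ U : EuclideanSpace ℝ (Fin n) → ℝ, HarmonicOnBall n U ∧
    (∀ y ∈ ball (0 : EuclideanSpace ℝ (Fin n)) 1, |U y| ≤ 1) ∧
    c = |⟪gradient U x, ℓ⟫| }

section Aux

variable {n : ℕ}

local notation "E" => EuclideanSpace ℝ (Fin n)

lemma inner_gradient (f : E → ℝ) (x v : E) : ⟪gradient f x, v⟫ = fderiv ℝ f x v := by
  rw [gradient]
  exact InnerProductSpace.toDual_symm_apply

lemma sum_bilin (H : E →L[ℝ] E →L[ℝ] ℝ) (T : E ≃ₗᵢ[ℝ] E) :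
    ∑ i, H (T (EuclideanSpace.single i 1)) (T (EuclideanSpace.single i 1))
      = ∑ i, H (EuclideanSpace.single i 1) (EuclideanSpace.single i 1) := by
  classical
  set b := EuclideanSpace.basisFun (Fin n) ℝ with hb
  have hbe : ∀ i : Fin n, b i = EuclideanSpace.single i 1 := fun i => by
    simp [hb, EuclideanSpace.basisFun_apply]
  simp_rw [← hbe]
  have expand : ∀ q : E, H q q = ∑ j, ∑ k, ⟪b j, q⟫ * ⟪b k, q⟫ * H (b j) (b k) := by
    intro q
    calc H q q = H (∑ j, ⟪b j, q⟫ • b j) (∑ k, ⟪b k, q⟫ • b k) := by rw [b.sum_repr']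
    _ = ∑ j, ∑ k, ⟪b j, q⟫ * ⟪b k, q⟫ * H (b j) (b k) := by
        simp only [map_sum, map_smul, ContinuousLinearMap.sum_apply,
          ContinuousLinearMap.smul_apply, smul_eq_mul, Finset.mul_sum]
        rw [Finset.sum_comm]
        exact Finset.sum_congr rfl fun j _ => Finset.sum_congr rfl fun k _ => by ring
  calc ∑ i, H (T (b i)) (T (b i))
      = ∑ i, ∑ j, ∑ k, ⟪b j, T (b i)⟫ * ⟪b k, T (b i)⟫ * H (b j) (b k) := by
        simp_rw [expand]
    _ = ∑ j, ∑ k, (∑ i, ⟪b j, T (b i)⟫ * ⟪b k, T (b i)⟫) * H (b j) (b k) := by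
        rw [Finset.sum_comm]
        refine Finset.sum_congr rfl fun j _ => ?_
        rw [Finset.sum_comm]
        refine Finset.sum_congr rfl fun k _ => ?_
        rw [Finset.sum_mul]
    _ = ∑ j, ∑ k, (if j = k then (1:ℝ) else 0) * H (b j) (b k) := by
        refine Finset.sum_congr rfl fun j _ => Finset.sum_congr rfl fun k _ => ?_
        congr 1
        have h1 : ∀ i, ⟪b j, T (b i)⟫ = ⟪T.symm (b j), b i⟫ := by
          intro i
          rw [← T.inner_map_map (T.symm (b j)) (b i), T.apply_symm_apply]
        have h2 : ∀ i, ⟪b k, T (b i)⟫ = ⟪b i, T.symm (b k)⟫ := by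
          intro i
          rw [real_inner_comm, ← T.inner_map_map (b i) (T.symm (b k)), T.apply_symm_apply]
        simp_rw [h1, h2]
        rw [b.sum_inner_mul_inner, T.symm.inner_map_map]
        exact orthonormal_iff_ite.mp b.orthonormal j k
    _ = ∑ j, H (b j) (b j) := by
        simp [Finset.sum_ite_eq, Finset.mem_univ]

lemma diffAt_of_harm {U : E → ℝ} (hU : ContDiffOn ℝ 2 U (ball 0 1)) {p : E}
    (hp : p ∈ ball (0:E) 1) : DifferentiableAt ℝ U p :=
  (hU.contDiffAt (isOpen_ball.mem_nhds hp)).differentiableAt two_ne_zero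

lemma diffAt_fderiv_of_harm {U : E → ℝ} (hU : ContDiffOn ℝ 2 U (ball 0 1)) {p : E}
    (hp : p ∈ ball (0:E) 1) : DifferentiableAt ℝ (fderiv ℝ U) p := by
  have h2 : ContDiffAt ℝ 2 U p := hU.contDiffAt (isOpen_ball.mem_nhds hp)
  have := h2.fderiv_right (m := 1) (le_refl _)
  exact this.differentiableAt one_ne_zero

/-- Second derivative in pointwise form. -/
lemma second_deriv_eq {U : E → ℝ} (hU : ContDiffOn ℝ 2 U (ball 0 1)) {p : E}
    (hp : p ∈ ball (0:E) 1) (w v : E) :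
    fderiv ℝ (fun y => fderiv ℝ U y w) p v = fderiv ℝ (fderiv ℝ U) p v w := by
  have hd := diffAt_fderiv_of_harm hU hp
  have h0 : (fun y => fderiv ℝ U y w) = (fun L : E →L[ℝ] ℝ => L w) ∘ (fderiv ℝ U) := rfl
  rw [h0]
  have hcomp := fderiv_comp (𝕜 := ℝ)
    (g := fun L : E →L[ℝ] ℝ => L w) (f := fderiv ℝ U) p
    ((ContinuousLinearMap.apply ℝ ℝ w).differentiableAt) hd
  rw [hcomp]
  have h1 : fderiv ℝ (fun L : E →L[ℝ] ℝ => L w) (fderiv ℝ U p)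
      = ContinuousLinearMap.apply ℝ ℝ w := (ContinuousLinearMap.apply ℝ ℝ w).fderiv
  rw [h1]
  rfl

lemma harmonic_comp {U : E → ℝ} (hU : HarmonicOnBall n U) (T : E ≃ₗᵢ[ℝ] E) :
    HarmonicOnBall n (U ∘ T) := by
  classical
  obtain ⟨hC, hΔ⟩ := hU
  set Tc : E →L[ℝ] E := (T.toContinuousLinearEquiv : E →L[ℝ] E) with hTc
  have hTfun : ⇑T = ⇑Tc := rfl
  have hmap : Set.MapsTo (⇑T) (ball (0:E) 1) (ball (0:E) 1) := by
    intro y hy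
    simpa [mem_ball_zero_iff, T.norm_map] using hy
  have hTcd : ContDiff ℝ 2 (⇑T) := by rw [hTfun]; exact Tc.contDiff
  constructor
  · exact hC.comp hTcd.contDiffOn hmap
  · intro z hz
    have hTz : T z ∈ ball (0:E) 1 := hmap hz
    have hfd : ∀ y ∈ ball (0:E) 1, fderiv ℝ (U ∘ ⇑T) y = (fderiv ℝ U (T y)).comp Tc := by
      intro y hy
      have h1 : DifferentiableAt ℝ U (T y) := diffAt_of_harm hC (hmap hy)
      have h2 : DifferentiableAt ℝ (⇑T) y := by rw [hTfun]; exact Tc.differentiableAt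
      rw [fderiv_comp y h1 h2]
      congr 1
      rw [hTfun]; exact Tc.fderiv
    set H := fderiv ℝ (fderiv ℝ U) (T z) with hH
    have key : ∀ i : Fin n,
        fderiv ℝ (fun y => fderiv ℝ (U ∘ ⇑T) y (EuclideanSpace.single i 1)) z
          (EuclideanSpace.single i 1)
        = H (T (EuclideanSpace.single i 1)) (T (EuclideanSpace.single i 1)) := by
      intro i
      set w := T (EuclideanSpace.single i 1) with hw
      have hev : (fun y => fderiv ℝ (U ∘ ⇑T) y (EuclideanSpace.single i 1))
          =ᶠ[nhds z] (fun y => fderiv ℝ U (T y) w) := by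
        filter_upwards [isOpen_ball.mem_nhds hz] with y hy
        rw [hfd y hy]
        simp [hw, hTfun]
      rw [hev.fderiv_eq]
      have hsplit : (fun y => fderiv ℝ U (T y) w) = (fun p => fderiv ℝ U p w) ∘ ⇑T := rfl
      rw [hsplit]
      have houter : DifferentiableAt ℝ (fun p => fderiv ℝ U p w) (T z) := by
        have h3 : (fun p => fderiv ℝ U p w) = (fun L : E →L[ℝ] ℝ => L w) ∘ fderiv ℝ U := rfl
        rw [h3]
        exact ((ContinuousLinearMap.apply ℝ ℝ w).differentiableAt).comp _
          (diffAt_fderiv_of_harm hC hTz)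
      have hinner : DifferentiableAt ℝ (⇑T) z := by rw [hTfun]; exact Tc.differentiableAt
      rw [fderiv_comp z houter hinner]
      have hfT : fderiv ℝ (⇑T) z = Tc := by rw [hTfun]; exact Tc.fderiv
      rw [hfT]
      simp only [ContinuousLinearMap.coe_comp', Function.comp_apply]
      have h4 : (Tc (EuclideanSpace.single i 1)) = T (EuclideanSpace.single i 1) := rfl
      rw [h4]
      rw [second_deriv_eq hC hTz w (T (EuclideanSpace.single i 1))]
    simp_rw [key]
    have halg := sum_bilin (n := n) H T
    rw [halg]
    have hfin : ∀ i : Fin n,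
        H (EuclideanSpace.single i 1) (EuclideanSpace.single i 1)
        = fderiv ℝ (fun y => fderiv ℝ U y (EuclideanSpace.single i 1)) (T z)
            (EuclideanSpace.single i 1) := fun i =>
      (second_deriv_eq hC hTz (EuclideanSpace.single i 1) (EuclideanSpace.single i 1)).symm
    simp_rw [hfin]
    exact hΔ (T z) hTz

lemma exists_isometry_fix (hn : 2 < n) (u a b : E)
    (hu : ‖u‖ = 1) (ha : ‖a‖ = 1) (hb : ‖b‖ = 1) (hab : ⟪u, a⟫ = ⟪u, b⟫) :
    ∃ T : E ≃ₗᵢ[ℝ] E, T u = u ∧ T a = b := by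
  classical
  set c : ℝ := ⟪u, a⟫ with hc
  set v : E := a - c • u with hv
  set w : E := b - c • u with hw
  have huu : ⟪u, u⟫ = 1 := by
    rw [real_inner_self_eq_norm_sq, hu]; norm_num
  have hub : ⟪u, b⟫ = c := hab.symm
  have huv : ⟪u, v⟫ = 0 := by
    simp only [hv, inner_sub_right, inner_smul_right, huu, mul_one]
    rw [← hc]; ring
  have huw : ⟪u, w⟫ = 0 := by
    simp only [hw, inner_sub_right, inner_smul_right, huu, mul_one, hub]
    ring
  have hnv : ‖v‖ ^ 2 = 1 - c ^ 2 := by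
    have h2 : ⟪a, c • u⟫ = c * c := by
      rw [inner_smul_right, real_inner_comm, ← hc]
    rw [hv, norm_sub_sq_real, ha, h2, norm_smul, hu]
    simp [sq_abs]
    ring
  have hnw : ‖w‖ ^ 2 = 1 - c ^ 2 := by
    have h2 : ⟪b, c • u⟫ = c * c := by
      rw [inner_smul_right, real_inner_comm, hub]
    rw [hw, norm_sub_sq_real, hb, h2, norm_smul, hu]
    simp [sq_abs]
    ring
  have hvw : ‖v‖ = ‖w‖ := by
    nlinarith [norm_nonneg v, norm_nonneg w]
  by_cases hr : ‖v‖ = 0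
  · have hv0 : v = 0 := norm_eq_zero.mp hr
    have hw0 : w = 0 := norm_eq_zero.mp (hvw ▸ hr)
    refine ⟨LinearIsometryEquiv.refl ℝ E, rfl, ?_⟩
    have h1 : a = c • u := by rwa [hv, sub_eq_zero] at hv0
    have h2 : b = c • u := by rwa [hw, sub_eq_zero] at hw0
    simp [h1, h2]
  · have hrpos : 0 < ‖v‖ := lt_of_le_of_ne (norm_nonneg v) (Ne.symm hr)
    set vh : E := ‖v‖⁻¹ • v with hvh
    set wh : E := ‖w‖⁻¹ • w with hwh
    have hnvh : ‖vh‖ = 1 := by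
      rw [hvh, norm_smul, norm_inv, norm_norm, inv_mul_cancel₀ hr]
    have hnwh : ‖wh‖ = 1 := by
      rw [hwh, norm_smul, norm_inv, norm_norm, inv_mul_cancel₀ (hvw ▸ hr)]
    have huvh : ⟪u, vh⟫ = 0 := by rw [hvh, inner_smul_right, huv, mul_zero]
    have huwh : ⟪u, wh⟫ = 0 := by rw [hwh, inner_smul_right, huw, mul_zero]
    set i0 : Fin n := ⟨0, by omega⟩ with hi0
    set i1 : Fin n := ⟨1, by omega⟩ with hi1
    have hne : i0 ≠ i1 := by simp [hi0, hi1, Fin.ext_iff]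
    have hcard : Module.finrank ℝ (EuclideanSpace ℝ (Fin n)) = Fintype.card (Fin n) := by
      simp [finrank_euclideanSpace]
    have mk_basis : ∀ z : E, ‖z‖ = 1 → ⟪u, z⟫ = 0 →
        ∃ B : OrthonormalBasis (Fin n) ℝ (EuclideanSpace ℝ (Fin n)), B i0 = u ∧ B i1 = z := by
      intro z hz huz
      set f : Fin n → E := fun i => if i = i0 then u else z with hf
      have e0 : f i0 = u := if_pos rfl
      have e1 : f i1 = z := if_neg hne.symm
      have horth : Orthonormal ℝ (({i0, i1} : Set (Fin n)).restrict f) := by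
        constructor
        · rintro ⟨i, hi⟩
          simp only [Set.mem_insert_iff, Set.mem_singleton_iff] at hi
          show ‖f i‖ = 1
          rcases hi with rfl | rfl
          · rw [e0, hu]
          · rw [e1, hz]
        · rintro ⟨i, hi⟩ ⟨j, hj⟩ hij
          have hij' : i ≠ j := by simpa [Subtype.ext_iff] using hij
          simp only [Set.mem_insert_iff, Set.mem_singleton_iff] at hi hj
          show ⟪f i, f j⟫ = 0
          rcases hi with rfl | rfl <;> rcases hj with rfl | rfl
          · exact absurd rfl hij'
          · rw [e0, e1]; exact huz
          · rw [e0, e1, real_inner_comm]; exact huz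
          · exact absurd rfl hij'
      obtain ⟨B, hB⟩ := horth.exists_orthonormalBasis_extension_of_card_eq hcard
      refine ⟨B, ?_, ?_⟩
      · rw [hB i0 (by simp), e0]
      · rw [hB i1 (by simp), e1]
    obtain ⟨B, hB0, hB1⟩ := mk_basis vh hnvh huvh
    obtain ⟨B', hB'0, hB'1⟩ := mk_basis wh hnwh huwh
    set T : E ≃ₗᵢ[ℝ] E := B.repr.trans B'.repr.symm with hT
    have hTB : ∀ i, T (B i) = B' i := by
      intro i
      rw [hT, LinearIsometryEquiv.trans_apply, B.repr_self]
      exact B'.repr_symm_single i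
    have hTu : T u = u := by rw [← hB0, hTB, hB'0, hB0]
    have hTvh : T vh = wh := by rw [← hB1, hTB, hB'1]
    refine ⟨T, hTu, ?_⟩
    have hav : a = c • u + ‖v‖ • vh := by
      rw [hvh, smul_inv_smul₀ hr, hv]
      abel
    have hbw : b = c • u + ‖w‖ • wh := by
      rw [hwh, smul_inv_smul₀ (hvw ▸ hr), hw]
      abel
    rw [hav, map_add, map_smul, map_smul, hTu, hTvh, hvw, ← hbw]

lemma dirSet_subset (x l l' : E) (T : E ≃ₗᵢ[ℝ] E) (hx : x ∈ ball (0:E) 1) (hTx : T x = x)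
    (key : ∀ g : E, |⟪g, T l'⟫| = |⟪g, l⟫|) :
    { c : ℝ | ∃ U : EuclideanSpace ℝ (Fin n) → ℝ, HarmonicOnBall n U ∧
      (∀ y ∈ ball (0 : EuclideanSpace ℝ (Fin n)) 1, |U y| ≤ 1) ∧
      c = |⟪gradient U x, l⟫| }
    ⊆ { c : ℝ | ∃ U : EuclideanSpace ℝ (Fin n) → ℝ, HarmonicOnBall n U ∧
      (∀ y ∈ ball (0 : EuclideanSpace ℝ (Fin n)) 1, |U y| ≤ 1) ∧
      c = |⟪gradient U x, l'⟫| } := by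
  rintro cc ⟨U, hU, hbd, rfl⟩
  refine ⟨U ∘ T, harmonic_comp hU T, ?_, ?_⟩
  · intro y hy
    have hTy : T y ∈ ball (0:E) 1 := by simpa [mem_ball_zero_iff, T.norm_map] using hy
    exact hbd _ hTy
  · rw [inner_gradient, inner_gradient]
    set Tc : E →L[ℝ] E := (T.toContinuousLinearEquiv : E →L[ℝ] E) with hTcdef
    have hTfun : ⇑T = ⇑Tc := rfl
    have h1 : DifferentiableAt ℝ U (T x) := diffAt_of_harm hU.1 (by rw [hTx]; exact hx)
    have h2 : DifferentiableAt ℝ (⇑T) x := by rw [hTfun]; exact Tc.differentiableAt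
    rw [fderiv_comp x h1 h2]
    have hfT : fderiv ℝ (⇑T) x = Tc := by rw [hTfun]; exact Tc.fderiv
    rw [hfT]
    simp only [ContinuousLinearMap.coe_comp', Function.comp_apply]
    have h4 : Tc l' = T l' := rfl
    rw [h4, hTx, ← inner_gradient U x (T l'), ← inner_gradient U x l]
    exact (key (gradient U x)).symm

end Aux

/-- If the lines spanned by unit vectors `ℓ` and `ℓ'` make the same angle with
the radial direction `n_x = x/|x|`, then `𝒞(x;ℓ) = 𝒞(x;ℓ')`. -/
theorem dirConst_angle_invariant (n : ℕ) (hn : 2 < n)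
    (x : EuclideanSpace ℝ (Fin n)) (hx : ‖x‖ < 1) (hx0 : x ≠ 0)
    (ℓ ℓ' : EuclideanSpace ℝ (Fin n)) (hℓ : ‖ℓ‖ = 1) (hℓ' : ‖ℓ'‖ = 1)
    (hangle : |⟪‖x‖⁻¹ • x, ℓ⟫| = |⟪‖x‖⁻¹ • x, ℓ'⟫|) :
    dirConst n x ℓ = dirConst n x ℓ' := by
  classical
  have hxball : x ∈ ball (0 : EuclideanSpace ℝ (Fin n)) 1 := mem_ball_zero_iff.mpr hx
  set u : EuclideanSpace ℝ (Fin n) := ‖x‖⁻¹ • x with hu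
  have hxn : ‖x‖ ≠ 0 := norm_ne_zero_iff.mpr hx0
  have hun : ‖u‖ = 1 := by rw [hu, norm_smul, norm_inv, norm_norm, inv_mul_cancel₀ hxn]
  have hxu : ‖x‖ • u = x := smul_inv_smul₀ hxn x
  have fix_x : ∀ T : EuclideanSpace ℝ (Fin n) ≃ₗᵢ[ℝ] EuclideanSpace ℝ (Fin n),
      T u = u → T x = x := by
    intro T hTu
    calc T x = T (‖x‖ • u) := by rw [hxu]
      _ = ‖x‖ • T u := map_smul T _ _
      _ = x := by rw [hTu, hxu]
  rcases abs_eq_abs.mp hangle with h | h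
  · -- ⟪u, ℓ⟫ = ⟪u, ℓ'⟫
    obtain ⟨T, hTu, hTl⟩ := exists_isometry_fix hn u ℓ' ℓ hun hℓ' hℓ h.symm
    have hTx : T x = x := fix_x T hTu
    have hTsx : T.symm x = x := T.symm_apply_eq.mpr hTx.symm
    have hTsl : T.symm ℓ = ℓ' := T.symm_apply_eq.mpr hTl.symm
    unfold dirConst
    congr 1
    apply Set.Subset.antisymm
    · exact dirSet_subset x ℓ ℓ' T hxball hTx (fun g => by rw [hTl])
    · exact dirSet_subset x ℓ' ℓ T.symm hxball hTsx (fun g => by rw [hTsl])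
  · -- ⟪u, ℓ⟫ = -⟪u, ℓ'⟫
    have h' : ⟪u, ℓ'⟫ = ⟪u, -ℓ⟫ := by
      rw [inner_neg_right]
      linarith [h]
    obtain ⟨T, hTu, hTl⟩ := exists_isometry_fix hn u ℓ' (-ℓ) hun hℓ'
      (by rw [norm_neg, hℓ]) h'
    have hTx : T x = x := fix_x T hTu
    have hTsx : T.symm x = x := T.symm_apply_eq.mpr hTx.symm
    have hTneg : T (-ℓ') = ℓ := by
      have h5 : T (-ℓ') = -(T ℓ') := map_neg T ℓ'
      rw [h5, hTl, neg_neg]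
    have hTsl : T.symm ℓ = -ℓ' := T.symm_apply_eq.mpr hTneg.symm
    unfold dirConst
    congr 1
    apply Set.Subset.antisymm
    · refine dirSet_subset x ℓ ℓ' T hxball hTx (fun g => ?_)
      rw [hTl, inner_neg_right, abs_neg]
    · refine dirSet_subset x ℓ' ℓ T.symm hxball hTsx (fun g => ?_)
      rw [hTsl, inner_neg_right, abs_neg]
end
end

section
/- Let a, b > 0 with a/b ≤ n − 1. Then for every γ ≥ 0: (1/√(1+γ²)) · ∫₀¹ √(a γ² t² + b) · (1 − t²)^{(n−4)/2} dt ≤ ∫₀¹ √b · (1 − t²)^{(n−4)/2} dt; that is, the supremum over γ ≥ 0 of the left-hand side is attained at γ = 0. Moreover, if a/b < n − 1, then the inequality is strict for every γ > 0, so γ = 0 is the unique maximizer. -/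
open Real MeasureTheory Set intervalIntegral

/-- Pointwise AM–GM bound: `√x ≤ (x + c)/(2√c)` for `x ≥ 0`, `c > 0`. -/
lemma sqrt_le_add_div {x c : ℝ} (hx : 0 ≤ x) (hc : 0 < c) :
    Real.sqrt x ≤ (x + c) / (2 * Real.sqrt c) := by
  rw [le_div_iff₀ (by positivity)]
  nlinarith [sq_nonneg (Real.sqrt x - Real.sqrt c), Real.sq_sqrt hx, Real.sq_sqrt hc.le,
    Real.sqrt_nonneg x, Real.sqrt_nonneg c]

/-- Integrability of the weight `(1 - t²)^s` on `[0,1]` for `s > -1`. -/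
lemma weight_integrable {s : ℝ} (hs : -1 < s) :
    IntervalIntegrable (fun t : ℝ => (1 - t ^ 2) ^ s) volume 0 1 := by
  have h1 : IntervalIntegrable (fun t : ℝ => (1 - t) ^ s) volume 0 1 := by
    have := ((intervalIntegrable_rpow' (a := 0) (b := 1) hs).comp_sub_left 1).symm
    simpa using this
  have h2 : IntervalIntegrable (fun t : ℝ => (1 + t) ^ s * (1 - t) ^ s) volume 0 1 := by
    apply h1.continuousOn_mul
    apply ContinuousOn.rpow_const (by fun_prop)
    intro t ht
    left
    have : (0:ℝ) ≤ t := by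
      rcases ht with ht
      simp only [Set.uIcc_of_le (by norm_num : (0:ℝ) ≤ 1), Set.mem_Icc] at ht
      exact ht.1
    positivity
  refine h2.congr ?_
  have hIoc : Set.uIoc (0:ℝ) 1 = Ioc 0 1 := Set.uIoc_of_le zero_le_one
  intro t ht
  rw [hIoc] at ht
  have h1t : (0:ℝ) ≤ 1 - t := by linarith [ht.2]
  have h2t : (0:ℝ) ≤ 1 + t := by linarith [ht.1]
  beta_reduce
  rw [show (1 : ℝ) - t ^ 2 = (1 + t) * (1 - t) by ring, Real.mul_rpow h2t h1t]

/-- The key Beta-type identity: `∫₀¹ (1-t²)^s dt = (2s+3) ∫₀¹ t²(1-t²)^s dt`. -/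
lemma weight_identity {s : ℝ} (hs : -1 < s) :
    ∫ t in (0:ℝ)..1, (1 - t ^ 2) ^ s
      = (2 * s + 3) * ∫ t in (0:ℝ)..1, t ^ 2 * (1 - t ^ 2) ^ s := by
  have hs1 : (0:ℝ) < s + 1 := by linarith
  set F : ℝ → ℝ := fun t => t * (1 - t ^ 2) ^ (s + 1) with hF
  have hcont : ContinuousOn F (Icc 0 1) := by
    apply continuousOn_id.mul
    apply ContinuousOn.rpow_const (by fun_prop)
    intro t _
    right; linarith
  have hderiv : ∀ t ∈ Ioo (0:ℝ) 1,
      HasDerivAt F ((1 - t ^ 2) ^ s - (2 * s + 3) * (t ^ 2 * (1 - t ^ 2) ^ s)) t := by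
    intro t ht
    have hpos : (0:ℝ) < 1 - t ^ 2 := by nlinarith [ht.1, ht.2]
    have hb : HasDerivAt (fun t : ℝ => 1 - t ^ 2) (-(2 * t)) t := by
      simpa using ((hasDerivAt_pow 2 t).const_sub 1)
    have hpow : HasDerivAt (fun t : ℝ => (1 - t ^ 2) ^ (s + 1))
        ((s + 1) * (1 - t ^ 2) ^ s * (-(2 * t))) t := by
      have h := (Real.hasDerivAt_rpow_const (x := 1 - t ^ 2) (p := s + 1)
        (Or.inl hpos.ne')).comp t hb
      rw [show s + 1 - 1 = s by ring] at h
      exact h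
    have h : HasDerivAt F
        (1 * (1 - t ^ 2) ^ (s + 1) + id t * ((s + 1) * (1 - t ^ 2) ^ s * -(2 * t))) t :=
      (hasDerivAt_id t).fun_mul hpow
    have hsplit : (1 - t ^ 2) ^ (s + 1) = (1 - t ^ 2) ^ s * (1 - t ^ 2) := by
      rw [Real.rpow_add hpos, Real.rpow_one]
    convert h using 1
    simp only [id_eq, one_mul]
    rw [hsplit]
    ring
  have hintW := weight_integrable hs
  have hintT : IntervalIntegrable (fun t : ℝ => t ^ 2 * (1 - t ^ 2) ^ s) volume 0 1 :=
    hintW.continuousOn_mul (by fun_prop)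
  have hint : IntervalIntegrable
      (fun t : ℝ => (1 - t ^ 2) ^ s - (2 * s + 3) * (t ^ 2 * (1 - t ^ 2) ^ s)) volume 0 1 :=
    hintW.sub (hintT.const_mul _)
  have key := intervalIntegral.integral_eq_sub_of_hasDeriv_right_of_le zero_le_one hcont
    (fun t ht => (hderiv t ht).hasDerivWithinAt) hint
  have hF1 : F 1 = 0 := by
    simp [hF, Real.zero_rpow hs1.ne']
  have hF0 : F 0 = 0 := by simp [hF]
  rw [hF1, hF0, sub_zero] at key
  rw [intervalIntegral.integral_sub hintW (hintT.const_mul _),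
    intervalIntegral.integral_const_mul] at key
  linarith

/-- The auxiliary optimisation problem: if `a/b ≤ n−1`, the supremum over
`γ ≥ 0` of `(1+γ²)^{-1/2} ∫₀¹ √(aγ²t²+b) (1−t²)^{(n−4)/2} dt` is attained at
`γ = 0`; if `a/b < n−1`, then `γ = 0` is the unique maximizer. -/
theorem auxiliary_optimisation (n : ℕ) (hn : 2 < n)
    (a b : ℝ) (ha : 0 < a) (hb : 0 < b) (hab : a / b ≤ (n : ℝ) - 1) :
    (∀ γ : ℝ, 0 ≤ γ →
      (1 / Real.sqrt (1 + γ ^ 2)) *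
          ∫ t in (0 : ℝ)..1, Real.sqrt (a * (γ * t) ^ 2 + b) *
            (1 - t ^ 2) ^ (((n : ℝ) - 4) / 2) ≤
        ∫ t in (0 : ℝ)..1, Real.sqrt b * (1 - t ^ 2) ^ (((n : ℝ) - 4) / 2)) ∧
    (a / b < (n : ℝ) - 1 → ∀ γ : ℝ, 0 < γ →
      (1 / Real.sqrt (1 + γ ^ 2)) *
          ∫ t in (0 : ℝ)..1, Real.sqrt (a * (γ * t) ^ 2 + b) *
            (1 - t ^ 2) ^ (((n : ℝ) - 4) / 2) <
        ∫ t in (0 : ℝ)..1, Real.sqrt b * (1 - t ^ 2) ^ (((n : ℝ) - 4) / 2)) := by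
  have hn3 : (3:ℝ) ≤ (n:ℝ) := by exact_mod_cast hn
  set s : ℝ := ((n : ℝ) - 4) / 2 with hs_def
  have hs : -1 < s := by rw [hs_def]; linarith
  set W := ∫ t in (0:ℝ)..1, (1 - t ^ 2) ^ s with hW_def
  set T := ∫ t in (0:ℝ)..1, t ^ 2 * (1 - t ^ 2) ^ s with hT_def
  clear_value s W T
  have h23 : 2 * s + 3 = (n:ℝ) - 1 := by rw [hs_def]; ring
  have hid : W = ((n:ℝ) - 1) * T := by rw [hW_def, hT_def, ← h23]; exact weight_identity hs
  have hintW := weight_integrable hs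
  have hintT : IntervalIntegrable (fun t : ℝ => t ^ 2 * (1 - t ^ 2) ^ s) volume 0 1 :=
    hintW.continuousOn_mul (by fun_prop)
  have hTpos : 0 < T := by
    rw [hT_def]
    refine intervalIntegral_pos_of_pos_on hintT (fun t ht => ?_) one_pos
    have h1 : (0:ℝ) < 1 - t ^ 2 := by nlinarith [ht.1, ht.2]
    exact mul_pos (pow_pos ht.1 2) (Real.rpow_pos_of_pos h1 s)
  have hWpos : 0 < W := by rw [hid]; nlinarith
  -- the right-hand side integral
  have hRHS : (∫ t in (0:ℝ)..1, Real.sqrt b * (1 - t ^ 2) ^ s) = Real.sqrt b * W := by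
    rw [hW_def]; exact intervalIntegral.integral_const_mul _ _
  -- key estimate for the left integral
  have key : ∀ γ : ℝ,
      (∫ t in (0:ℝ)..1, Real.sqrt (a * (γ * t) ^ 2 + b) * (1 - t ^ 2) ^ s)
        ≤ (1 / (2 * Real.sqrt (b * (1 + γ ^ 2))))
            * (a * γ ^ 2 * T + (b + b * (1 + γ ^ 2)) * W) := by
    intro γ
    set c : ℝ := b * (1 + γ ^ 2) with hc_def
    have hc : 0 < c := by positivity
    have hintL : IntervalIntegrable
        (fun t : ℝ => Real.sqrt (a * (γ * t) ^ 2 + b) * (1 - t ^ 2) ^ s) volume 0 1 :=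
      hintW.continuousOn_mul (by fun_prop)
    have hintR : IntervalIntegrable
        (fun t : ℝ => ((a * (γ * t) ^ 2 + b + c) / (2 * Real.sqrt c)) * (1 - t ^ 2) ^ s)
        volume 0 1 :=
      hintW.continuousOn_mul (by fun_prop)
    have hmono : (∫ t in (0:ℝ)..1, Real.sqrt (a * (γ * t) ^ 2 + b) * (1 - t ^ 2) ^ s)
        ≤ ∫ t in (0:ℝ)..1, ((a * (γ * t) ^ 2 + b + c) / (2 * Real.sqrt c)) * (1 - t ^ 2) ^ s := by
      refine intervalIntegral.integral_mono_on zero_le_one hintL hintR (fun t ht => ?_)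
      have hw : (0:ℝ) ≤ (1 - t ^ 2) ^ s := by
        apply Real.rpow_nonneg
        nlinarith [ht.1, ht.2]
      refine mul_le_mul_of_nonneg_right ?_ hw
      exact sqrt_le_add_div (by positivity) hc
    refine hmono.trans_eq ?_
    have hsplit : (∫ t in (0:ℝ)..1,
        ((a * (γ * t) ^ 2 + b + c) / (2 * Real.sqrt c)) * (1 - t ^ 2) ^ s)
        = ∫ t in (0:ℝ)..1, (1 / (2 * Real.sqrt c))
            * (a * γ ^ 2 * (t ^ 2 * (1 - t ^ 2) ^ s) + (b + c) * (1 - t ^ 2) ^ s) := by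
      apply intervalIntegral.integral_congr
      intro t _
      ring
    rw [hsplit, intervalIntegral.integral_const_mul,
      intervalIntegral.integral_add (hintT.const_mul _) (hintW.const_mul _),
      intervalIntegral.integral_const_mul, intervalIntegral.integral_const_mul,
      ← hT_def, ← hW_def]
  -- final algebra
  have final : ∀ γ : ℝ, a * γ ^ 2 * T ≤ b * γ ^ 2 * W →
      (1 / (2 * Real.sqrt (b * (1 + γ ^ 2))))
          * (a * γ ^ 2 * T + (b + b * (1 + γ ^ 2)) * W)
        ≤ Real.sqrt b * W * Real.sqrt (1 + γ ^ 2) := by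
    intro γ hγ
    set u : ℝ := 1 + γ ^ 2 with hu_def
    have hu : 0 < u := by positivity
    have hsu : Real.sqrt u ^ 2 = u := Real.sq_sqrt hu.le
    have hsb : Real.sqrt b ^ 2 = b := Real.sq_sqrt hb.le
    have hsbu : Real.sqrt (b * u) = Real.sqrt b * Real.sqrt u := Real.sqrt_mul hb.le u
    have hsu0 : 0 < Real.sqrt u := Real.sqrt_pos.mpr hu
    have hsb0 : 0 < Real.sqrt b := Real.sqrt_pos.mpr hb
    have hX : a * γ ^ 2 * T + (b + b * u) * W ≤ 2 * (b * u) * W := by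
      have h2 : b * γ ^ 2 * W = b * u * W - b * W := by rw [hu_def]; ring
      linarith
    calc (1 / (2 * Real.sqrt (b * u))) * (a * γ ^ 2 * T + (b + b * u) * W)
        ≤ (1 / (2 * Real.sqrt (b * u))) * (2 * (b * u) * W) := by
          apply mul_le_mul_of_nonneg_left hX
          positivity
      _ = Real.sqrt b * W * Real.sqrt u := by
          have key2 : 2 * (b * u) * W
              = (2 * (Real.sqrt b * Real.sqrt u)) * (Real.sqrt b * W * Real.sqrt u) := by
            linear_combination (-2 * W * Real.sqrt u ^ 2) * hsb + (-2 * W * b) * hsu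
          rw [hsbu, key2, one_div, inv_mul_cancel_left₀ (by positivity)]
  have habT : a * T ≤ b * W := by
    have h1 : a ≤ b * ((n:ℝ) - 1) := by
      rw [div_le_iff₀ hb] at hab; linarith
    calc a * T ≤ b * ((n:ℝ) - 1) * T := mul_le_mul_of_nonneg_right h1 hTpos.le
      _ = b * W := by rw [hid]; ring
  constructor
  · intro γ hγ
    rw [hRHS]
    have hu : (0:ℝ) < 1 + γ ^ 2 := by positivity
    have hsu0 : 0 < Real.sqrt (1 + γ ^ 2) := Real.sqrt_pos.mpr hu
    have h1 : a * γ ^ 2 * T ≤ b * γ ^ 2 * W := by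
      have h := mul_le_mul_of_nonneg_right habT (sq_nonneg γ)
      calc a * γ ^ 2 * T = a * T * γ ^ 2 := by ring
        _ ≤ b * W * γ ^ 2 := h
        _ = b * γ ^ 2 * W := by ring
    have h2 := (key γ).trans (final γ h1)
    rw [div_mul_eq_mul_div, one_mul, div_le_iff₀ hsu0]
    exact h2
  · intro hab' γ hγ
    rw [hRHS]
    have hu : (0:ℝ) < 1 + γ ^ 2 := by positivity
    have hsu0 : 0 < Real.sqrt (1 + γ ^ 2) := Real.sqrt_pos.mpr hu
    have habT' : a * T < b * W := by
      have h1 : a < b * ((n:ℝ) - 1) := by rw [div_lt_iff₀ hb] at hab'; linarith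
      calc a * T < b * ((n:ℝ) - 1) * T := by nlinarith
        _ = b * W := by rw [hid]; ring
    -- strict inequality in the final step
    set u : ℝ := 1 + γ ^ 2 with hu_def
    have hsu : Real.sqrt u ^ 2 = u := Real.sq_sqrt hu.le
    have hsb : Real.sqrt b ^ 2 = b := Real.sq_sqrt hb.le
    have hsbu : Real.sqrt (b * u) = Real.sqrt b * Real.sqrt u := Real.sqrt_mul hb.le u
    have hsb0 : 0 < Real.sqrt b := Real.sqrt_pos.mpr hb
    have hX : a * γ ^ 2 * T + (b + b * u) * W < 2 * (b * u) * W := by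
      have hγ2 : 0 < γ ^ 2 := by positivity
      have h1 : a * γ ^ 2 * T < b * γ ^ 2 * W := by
        have h := mul_lt_mul_of_pos_right habT' hγ2
        calc a * γ ^ 2 * T = a * T * γ ^ 2 := by ring
          _ < b * W * γ ^ 2 := h
          _ = b * γ ^ 2 * W := by ring
      have h2 : b * γ ^ 2 * W = b * u * W - b * W := by rw [hu_def]; ring
      linarith
    have hstrict : (1 / (2 * Real.sqrt (b * u)))
        * (a * γ ^ 2 * T + (b + b * u) * W) < Real.sqrt b * W * Real.sqrt u := by
      have hpos : 0 < 1 / (2 * Real.sqrt (b * u)) := by positivity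
      calc (1 / (2 * Real.sqrt (b * u))) * (a * γ ^ 2 * T + (b + b * u) * W)
          < (1 / (2 * Real.sqrt (b * u))) * (2 * (b * u) * W) := by
            exact mul_lt_mul_of_pos_left hX hpos
        _ = Real.sqrt b * W * Real.sqrt u := by
            have key2 : 2 * (b * u) * W
                = (2 * (Real.sqrt b * Real.sqrt u)) * (Real.sqrt b * W * Real.sqrt u) := by
              linear_combination (-2 * W * Real.sqrt u ^ 2) * hsb + (-2 * W * b) * hsu
            rw [hsbu, key2, one_div, inv_mul_cancel_left₀ (by positivity)]
    have h2 := (key γ).trans_lt hstrict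
    rw [div_mul_eq_mul_div, one_mul, div_lt_iff₀ hsu0]
    exact h2
end
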